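/- Let m, d, l be positive integers with d·l ≥ 1 and let λ ≥ 1. Let x₁, …, x_m ∈ ℝ^d with ‖x_i‖₂ ≤ 1 for all i, and define Γ_i = λ·I_d + Σ_{j=1}^{i−1} x_j x_jᵀ for each i ∈ {1,…,m}. If Σ_{i=1}^{m} x_iᵀ Γ_i^{−1} x_i ≥ (m − 1)·4^{−l}, then (m − 1)·4^{−l} ≤ 2 d · log(1 + m/d). -/

import Mathlib

open Matrix Finset

private lemma psd_vmv {d : ℕ} (x : Fin d → ℝ) : (Matrix.vecMulVec x x).PosSemidef := by
  refine Matrix.posSemidef_iff_dotProduct_mulVec.mpr ⟨?_, ?_⟩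
  · ext i j
    simp [Matrix.vecMulVec_apply, Matrix.conjTranspose_apply, mul_comm]
  · intro y
    have h1 : Matrix.vecMulVec x x *ᵥ y = (x ⬝ᵥ y) • x := by
      ext i
      simp [Matrix.mulVec, Matrix.vecMulVec_apply, dotProduct, Finset.mul_sum, mul_comm,
        mul_left_comm, mul_assoc]
    rw [h1]
    have : star y ⬝ᵥ (x ⬝ᵥ y) • x = (x ⬝ᵥ y) * (x ⬝ᵥ y) := by
      rw [dotProduct_smul, star_trivial, smul_eq_mul]
      rw [dotProduct_comm]
    rw [this]
    exact mul_self_nonneg _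

private lemma gamma_posdef {d : ℕ} (lam : ℝ) (hlam : 0 < lam) (x : ℕ → Fin d → ℝ)
    (s : Finset ℕ) :
    (lam • (1 : Matrix (Fin d) (Fin d) ℝ)
      + ∑ j ∈ s, Matrix.vecMulVec (x j) (x j)).PosDef := by
  have h1 : (lam • (1 : Matrix (Fin d) (Fin d) ℝ)).PosDef := by
    have h : lam • (1 : Matrix (Fin d) (Fin d) ℝ) = Matrix.diagonal (fun _ => lam) := by
      ext i j; by_cases h : i = j <;> simp [Matrix.one_apply, h]
    rw [h]; exact Matrix.PosDef.diagonal fun _ => hlam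
  have h2 : (∑ j ∈ s, Matrix.vecMulVec (x j) (x j)).PosSemidef := by
    classical
    induction s using Finset.induction_on with
    | empty => simpa using Matrix.PosSemidef.zero
    | insert _ _ hns ih =>
        rw [Finset.sum_insert hns]
        exact (psd_vmv _).add ih
  exact h1.add_posSemidef h2

private lemma det_add_vmv {d : ℕ} {A : Matrix (Fin d) (Fin d) ℝ} (hA : A.PosDef)
    (v : Fin d → ℝ) :
    (A + Matrix.vecMulVec v v).det = A.det * (1 + v ⬝ᵥ (A⁻¹ *ᵥ v)) := by
  have hdet : IsUnit A.det := hA.det_pos.ne'.isUnit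
  rw [Matrix.vecMulVec_eq Unit, Matrix.det_add_replicateCol_mul_replicateRow hdet]
  congr 1
  rw [Matrix.det_unique]
  simp [Matrix.mul_apply, Matrix.replicateRow_apply, Matrix.replicateCol_apply, dotProduct, Matrix.mulVec,
    Finset.sum_mul, Finset.mul_sum]
  rw [Finset.sum_comm]
  congr 1; ext i; congr 1; ext j; ring

private lemma quad_bounds {d : ℕ} (lam : ℝ) (hlam : 1 ≤ lam)
    {S A : Matrix (Fin d) (Fin d) ℝ} (hS : S.PosSemidef)
    (hA : A = lam • (1 : Matrix (Fin d) (Fin d) ℝ) + S) (hApd : A.PosDef)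
    {v : Fin d → ℝ} (hv : v ⬝ᵥ v ≤ 1) :
    0 ≤ v ⬝ᵥ (A⁻¹ *ᵥ v) ∧ v ⬝ᵥ (A⁻¹ *ᵥ v) ≤ 1 := by
  set y : Fin d → ℝ := A⁻¹ *ᵥ v with hy
  have hAy : A *ᵥ y = v := by
    rw [hy, Matrix.mulVec_mulVec, Matrix.mul_nonsing_inv _ hApd.det_pos.ne'.isUnit,
      Matrix.one_mulVec]
  set t : ℝ := v ⬝ᵥ y with ht
  have hyy : 0 ≤ y ⬝ᵥ y := by
    apply Finset.sum_nonneg; intro i _; exact mul_self_nonneg _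
  have hvv : 0 ≤ v ⬝ᵥ v := by
    apply Finset.sum_nonneg; intro i _; exact mul_self_nonneg _
  have h1 : lam * (y ⬝ᵥ y) ≤ t := by
    have : t = y ⬝ᵥ (A *ᵥ y) := by rw [ht]; rw [← hAy]; rw [dotProduct_comm]
    rw [this, hA, Matrix.add_mulVec, Matrix.smul_mulVec, Matrix.one_mulVec,
      dotProduct_add, dotProduct_smul, smul_eq_mul]
    have := hS.dotProduct_mulVec_nonneg y
    rw [star_trivial] at this
    linarith
  have ht0 : 0 ≤ t := le_trans (by positivity) h1
  have hcs : t ^ 2 ≤ (v ⬝ᵥ v) * (y ⬝ᵥ y) := by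
    have := Finset.sum_mul_sq_le_sq_mul_sq Finset.univ v y
    simpa [dotProduct, sq, ht] using this
  exact ⟨ht0, by nlinarith [h1, hcs, hyy, hvv, hlam]⟩

private lemma le_two_log {u : ℝ} (h0 : 0 ≤ u) (h1 : u ≤ 1) : u ≤ 2 * Real.log (1 + u) := by
  have hpos : (0:ℝ) < 1 + u := by linarith
  have hlog := Real.log_le_sub_one_of_pos (show (0:ℝ) < (1+u)⁻¹ by positivity)
  rw [Real.log_inv] at hlog
  have hinv : (1+u) * (1+u)⁻¹ = 1 := mul_inv_cancel₀ hpos.ne'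
  nlinarith [hlog, hinv]

private lemma det_le_of_trace {d : ℕ} (hd : 0 < d) {A : Matrix (Fin d) (Fin d) ℝ}
    (hApd : A.PosDef) (C : ℝ) (htr : A.trace ≤ (d:ℝ) * C) : A.det ≤ C ^ d := by
  classical
  have hH : A.IsHermitian := hApd.1
  have hd' : ((d:ℝ)) ≠ 0 := Nat.cast_ne_zero.mpr hd.ne'
  set e : Fin d → ℝ := hH.eigenvalues with he_def
  have he : ∀ i, 0 ≤ e i := fun i => hApd.posSemidef.eigenvalues_nonneg i
  have htr' : A.trace = ∑ i, e i := by
    rw [hH.trace_eq_sum_eigenvalues]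
    simp [he_def]
  have hdet' : A.det = ∏ i, e i := by simpa using hH.det_eq_prod_eigenvalues
  rw [hdet']
  have h := Real.geom_mean_le_arith_mean_weighted Finset.univ (fun _ => (d:ℝ)⁻¹) e
    (fun _ _ => by positivity) (by simp [Finset.card_univ]; field_simp) (fun i _ => he i)
  have h2 : ∑ i, (d:ℝ)⁻¹ * e i ≤ C := by
    rw [← Finset.mul_sum, inv_mul_le_iff₀ (by positivity)]
    rw [htr'] at htr; linarith
  have h3 : (∏ i, e i ^ ((d:ℝ)⁻¹)) ≤ C := le_trans h h2
  have h4 : (∏ i, e i ^ ((d:ℝ)⁻¹)) ^ d = ∏ i, e i := by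
    rw [← Finset.prod_pow]
    congr 1; ext i
    rw [← Real.rpow_natCast (e i ^ ((d:ℝ)⁻¹)) d, ← Real.rpow_mul (he i),
      inv_mul_cancel₀ hd', Real.rpow_one]
  calc ∏ i, e i = (∏ i, e i ^ ((d:ℝ)⁻¹)) ^ d := h4.symm
    _ ≤ C ^ d := pow_le_pow_left₀ (Finset.prod_nonneg fun i _ => Real.rpow_nonneg (he i) _) h3 d

/-- Combining the elliptical potential upper bound with the per-level lower bound:
if `∑_{i=1}^m x_iᵀ Γ_i⁻¹ x_i ≥ (m-1) 4^{-l}` where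
`Γ_i = λ I + ∑_{j<i} x_j x_jᵀ`, `λ ≥ 1` and `‖x_i‖₂ ≤ 1`, then
`(m-1) 4^{-l} ≤ 2 d log(1 + m/d)`. -/
theorem potential_lower_vs_upper
    (m d l : ℕ) (hm : 0 < m) (hd : 0 < d) (hl : 0 < l)
    (hdl : 1 ≤ d * l)
    (lam : ℝ) (hlam : 1 ≤ lam)
    (x : ℕ → Fin d → ℝ)
    (hx : ∀ i ∈ Finset.Icc 1 m, Real.sqrt (x i ⬝ᵥ x i) ≤ 1)
    (Γ : ℕ → Matrix (Fin d) (Fin d) ℝ)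
    (hΓ : ∀ i : ℕ, Γ i = lam • (1 : Matrix (Fin d) (Fin d) ℝ)
        + ∑ j ∈ Finset.Icc 1 (i - 1), Matrix.vecMulVec (x j) (x j))
    (h : ((m : ℝ) - 1) * ((4 : ℝ) ^ l)⁻¹
        ≤ ∑ i ∈ Finset.Icc 1 m, x i ⬝ᵥ ((Γ i)⁻¹).mulVec (x i)) :
    ((m : ℝ) - 1) * ((4 : ℝ) ^ l)⁻¹ ≤ 2 * d * Real.log (1 + (m : ℝ) / d) := by
  have hlam0 : (0:ℝ) < lam := lt_of_lt_of_le one_pos hlam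
  have hd' : ((d:ℝ)) ≠ 0 := Nat.cast_ne_zero.mpr hd.ne'
  have hdpos : (0:ℝ) < d := Nat.cast_pos.mpr hd
  -- norms
  have hxn : ∀ i ∈ Finset.Icc 1 m, x i ⬝ᵥ x i ≤ 1 := by
    intro i hi
    have h1 := hx i hi
    have h2 : 0 ≤ x i ⬝ᵥ x i := Finset.sum_nonneg fun j _ => mul_self_nonneg _
    nlinarith [Real.sq_sqrt h2, Real.sqrt_nonneg (x i ⬝ᵥ x i)]
  -- positive definiteness
  have hpd : ∀ i : ℕ, (Γ i).PosDef := by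
    intro i; rw [hΓ i]; exact gamma_posdef lam hlam0 x _
  -- quadratic form bounds
  have hu : ∀ i ∈ Finset.Icc 1 m,
      0 ≤ x i ⬝ᵥ ((Γ i)⁻¹ *ᵥ x i) ∧ x i ⬝ᵥ ((Γ i)⁻¹ *ᵥ x i) ≤ 1 := by
    intro i hi
    have hS : (∑ j ∈ Finset.Icc 1 (i-1), Matrix.vecMulVec (x j) (x j)).PosSemidef := by
      classical
      induction (Finset.Icc 1 (i-1)) using Finset.induction_on with
      | empty => simpa using Matrix.PosSemidef.zero
      | insert _ _ hns ih => rw [Finset.sum_insert hns]; exact (psd_vmv _).add ih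
    exact quad_bounds lam hlam hS (hΓ i) (hpd i) (hxn i hi)
  -- step recursion : Γ (i+1) = Γ i + x_i x_iᵀ  for i ≥ 1
  have hstep : ∀ k : ℕ, Γ (k+2) = Γ (k+1) + Matrix.vecMulVec (x (k+1)) (x (k+1)) := by
    intro k
    rw [hΓ (k+2), hΓ (k+1)]
    have : k + 2 - 1 = (k + 1 - 1) + 1 := by omega
    rw [this, Finset.sum_Icc_succ_top (Nat.succ_le_succ (Nat.zero_le _))]
    have : k + 1 - 1 + 1 = k + 1 := by omega
    rw [this, add_assoc]
  -- telescoping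
  have htel : ∀ n ≤ m, ∑ i ∈ Finset.Icc 1 n, x i ⬝ᵥ ((Γ i)⁻¹ *ᵥ x i)
      ≤ 2 * (Real.log (Γ (n+1)).det - Real.log (Γ 1).det) := by
    intro n hn
    induction n with
    | zero => simp
    | succ k ih =>
        have hk : k ≤ m := le_trans (Nat.le_succ k) hn
        have ih' := ih hk
        rw [Finset.sum_Icc_succ_top (Nat.succ_le_succ (Nat.zero_le _))]
        have hmem : k + 1 ∈ Finset.Icc 1 m := Finset.mem_Icc.mpr ⟨Nat.succ_le_succ (Nat.zero_le _), hn⟩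
        obtain ⟨hu0, hu1⟩ := hu (k+1) hmem
        have hdet : (Γ (k+2)).det = (Γ (k+1)).det * (1 + x (k+1) ⬝ᵥ ((Γ (k+1))⁻¹ *ᵥ x (k+1))) := by
          rw [hstep k]; exact det_add_vmv (hpd (k+1)) _
        have hpos1 : (0:ℝ) < (Γ (k+1)).det := (hpd (k+1)).det_pos
        have hpos2 : (0:ℝ) < 1 + x (k+1) ⬝ᵥ ((Γ (k+1))⁻¹ *ᵥ x (k+1)) := by linarith
        have hlogdet : Real.log (Γ (k+2)).det
            = Real.log (Γ (k+1)).det + Real.log (1 + x (k+1) ⬝ᵥ ((Γ (k+1))⁻¹ *ᵥ x (k+1))) := by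
          rw [hdet, Real.log_mul hpos1.ne' hpos2.ne']
        have hgain := le_two_log hu0 hu1
        have : (k + 1) + 1 = k + 2 := rfl
        rw [this, hlogdet]
        linarith
  have hsum := htel m le_rfl
  -- det Γ 1 = lam ^ d
  have hΓ1 : Real.log (Γ 1).det = (d:ℝ) * Real.log lam := by
    rw [hΓ 1]
    simp only [Nat.sub_self, Finset.Icc_self, show (1:ℕ) - 1 = 0 from rfl]
    rw [show Finset.Icc 1 0 = (∅ : Finset ℕ) from rfl]
    rw [Finset.sum_empty, add_zero, Matrix.det_smul, Matrix.det_one, mul_one,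
      Real.log_pow]
    simp
  -- trace bound on Γ (m+1)
  have htr : (Γ (m+1)).trace ≤ (d:ℝ) * (lam + (m:ℝ)/d) := by
    rw [hΓ (m+1)]
    rw [Matrix.trace_add, Matrix.trace_smul, Matrix.trace_one, Matrix.trace_sum]
    have h1 : ∀ j, (Matrix.vecMulVec (x j) (x j)).trace = x j ⬝ᵥ x j := by
      intro j
      simp [Matrix.trace, Matrix.diag, Matrix.vecMulVec_apply, dotProduct]
    have h2 : (m + 1 - 1) = m := by omega
    rw [h2]
    have h3 : ∑ j ∈ Finset.Icc 1 m, (Matrix.vecMulVec (x j) (x j)).trace ≤ (m:ℝ) := by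
      calc ∑ j ∈ Finset.Icc 1 m, (Matrix.vecMulVec (x j) (x j)).trace
          ≤ ∑ j ∈ Finset.Icc 1 m, (1:ℝ) := by
            apply Finset.sum_le_sum
            intro j hj; rw [h1 j]; exact hxn j hj
        _ = (m:ℝ) := by simp [Nat.card_Icc]
    have : lam • (d:ℝ) + ∑ j ∈ Finset.Icc 1 m, (Matrix.vecMulVec (x j) (x j)).trace
        ≤ lam * d + m := by
      rw [smul_eq_mul]; linarith
    calc lam • ((Fintype.card (Fin d) : ℝ)) + _ ≤ lam * d + m := by
          simpa [Fintype.card_fin] using this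
      _ = (d:ℝ) * (lam + (m:ℝ)/d) := by field_simp
  -- det bound
  have hC : (0:ℝ) < lam + (m:ℝ)/d := by positivity
  have hdetle : (Γ (m+1)).det ≤ (lam + (m:ℝ)/d) ^ d := det_le_of_trace hd (hpd (m+1)) _ htr
  have hlogle : Real.log (Γ (m+1)).det ≤ (d:ℝ) * Real.log (lam + (m:ℝ)/d) := by
    calc Real.log (Γ (m+1)).det ≤ Real.log ((lam + (m:ℝ)/d) ^ d) :=
          Real.log_le_log (hpd (m+1)).det_pos hdetle
      _ = (d:ℝ) * Real.log (lam + (m:ℝ)/d) := by rw [Real.log_pow]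
  -- combine
  have hkey : ∑ i ∈ Finset.Icc 1 m, x i ⬝ᵥ ((Γ i)⁻¹ *ᵥ x i)
      ≤ 2 * (d:ℝ) * Real.log (1 + (m:ℝ)/((d:ℝ) * lam)) := by
    have hratio : Real.log (lam + (m:ℝ)/d) - Real.log lam
        = Real.log (1 + (m:ℝ)/((d:ℝ)*lam)) := by
      rw [← Real.log_div hC.ne' hlam0.ne']
      congr 1
      field_simp
    calc ∑ i ∈ Finset.Icc 1 m, x i ⬝ᵥ ((Γ i)⁻¹ *ᵥ x i)
        ≤ 2 * (Real.log (Γ (m+1)).det - Real.log (Γ 1).det) := hsum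
      _ ≤ 2 * ((d:ℝ) * Real.log (lam + (m:ℝ)/d) - (d:ℝ) * Real.log lam) := by
          rw [hΓ1]; linarith
      _ = 2 * (d:ℝ) * (Real.log (lam + (m:ℝ)/d) - Real.log lam) := by ring
      _ = 2 * (d:ℝ) * Real.log (1 + (m:ℝ)/((d:ℝ) * lam)) := by rw [hratio]
  have hfinal : Real.log (1 + (m:ℝ)/((d:ℝ) * lam)) ≤ Real.log (1 + (m:ℝ)/d) := by
    apply Real.log_le_log (by positivity)
    have : (m:ℝ)/((d:ℝ)*lam) ≤ (m:ℝ)/d := by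
      apply div_le_div_of_nonneg_left (Nat.cast_nonneg m) hdpos
      nlinarith
    linarith
  calc ((m : ℝ) - 1) * ((4 : ℝ) ^ l)⁻¹
      ≤ ∑ i ∈ Finset.Icc 1 m, x i ⬝ᵥ ((Γ i)⁻¹ *ᵥ x i) := h
    _ ≤ 2 * (d:ℝ) * Real.log (1 + (m:ℝ)/((d:ℝ) * lam)) := hkey
    _ ≤ 2 * (d:ℝ) * Real.log (1 + (m:ℝ)/d) := by
        have h2d : (0:ℝ) ≤ 2 * (d:ℝ) := by positivity
        exact mul_le_mul_of_nonneg_left hfinal h2d
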